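/- Suppose β ∈ α^H and Γ = Γ(H,Ω,(α,β)) has strictly more than n(n−2) arcs, where n = |α^H|. Then the subgraph induced on α^H is a complete digraph. -/

import Mathlib

/-- The arc set of the orbital graph of `H` on `Ω` with base-pair `(α, β)`:
`{(α^h, β^h) : h ∈ H}`. -/
def orbitalArcs {Ω : Type*} (H : Subgroup (Equiv.Perm Ω)) (α β : Ω) : Set (Ω × Ω) :=
  {p | ∃ h ∈ H, h α = p.1 ∧ h β = p.2}

/-- The `H`-orbit of a point. -/
def orb {Ω : Type*} (H : Subgroup (Equiv.Perm Ω)) (α : Ω) : Set Ω :=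
  {γ | ∃ h ∈ H, h α = γ}

/-- A permutation `g` stabilizes the (ordered) orbit partition of `H` iff it maps every
point into its own `H`-orbit. -/
def stabilizesOrbitPartition {Ω : Type*} (H : Subgroup (Equiv.Perm Ω)) (g : Equiv.Perm Ω) : Prop :=
  ∀ x : Ω, g x ∈ orb H x

/-- The orbital graph is futile iff every permutation stabilizing the orbit partition of `H`
induces a graph automorphism of the orbital graph. -/
def Futile {Ω : Type*} (H : Subgroup (Equiv.Perm Ω)) (α β : Ω) : Prop :=
  ∀ g : Equiv.Perm Ω, stabilizesOrbitPartition H g →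
    ∀ γ δ : Ω, (γ, δ) ∈ orbitalArcs H α β ↔ (g γ, g δ) ∈ orbitalArcs H α β

theorem stmt_17 {Ω : Type*} [Fintype Ω] (H : Subgroup (Equiv.Perm Ω))
    (α β : Ω) (hαβ : α ≠ β) (hβ : β ∈ orb H α)
    (harcs : (orbitalArcs H α β).ncard > (orb H α).ncard * ((orb H α).ncard - 2)) :
    ∀ γ ∈ orb H α, ∀ δ ∈ orb H α, γ ≠ δ → (γ, δ) ∈ orbitalArcs H α β := by
  classical
  by_contra hcon
  push_neg at hcon
  obtain ⟨γ₀, hγ₀, δ₀, hδ₀, hne0, hnotarc⟩ := hcon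
  set O := orb H α with hOdef
  set A := orbitalArcs H α β with hAdef
  set n := O.ncard with hndef
  have hα : α ∈ O := ⟨1, H.one_mem, rfl⟩
  -- O is H-invariant
  have orbmem : ∀ h ∈ H, ∀ x ∈ O, h x ∈ O := by
    rintro h hh x ⟨k, hk, rfl⟩
    exact ⟨h * k, H.mul_mem hh hk, rfl⟩
  -- transitivity of the orbit from γ₀
  have trans : ∀ x ∈ O, ∃ h ∈ H, h γ₀ = x := by
    rintro x ⟨k, hk, rfl⟩
    obtain ⟨m, hm, hmeq⟩ := hγ₀
    refine ⟨k * m⁻¹, H.mul_mem hk (H.inv_mem hm), ?_⟩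
    simp [← hmeq]
  -- choice of translating element
  set g : Ω → Equiv.Perm Ω := fun x =>
    if hc : ∃ h ∈ H, h γ₀ = x then hc.choose else 1 with hgdef
  have hg : ∀ x ∈ O, g x ∈ H ∧ g x γ₀ = x := by
    intro x hx
    have hc := trans x hx
    simp only [hgdef, dif_pos hc]
    exact ⟨hc.choose_spec.1, hc.choose_spec.2⟩
  set Miss : Set (Ω × Ω) := (fun x => (x, g x δ₀)) '' O with hMiss
  set Diag : Set (Ω × Ω) := (fun x => (x, x)) '' O with hDiag
  -- basic properties of Miss
  have hmiss_not_arc : ∀ x ∈ O, (x, g x δ₀) ∉ A := by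
    rintro x hx ⟨k, hk, hk1, hk2⟩
    apply hnotarc
    refine ⟨(g x)⁻¹ * k, H.mul_mem (H.inv_mem (hg x hx).1) hk, ?_, ?_⟩
    · have h2 := (hg x hx).2
      have hkey : (g x)⁻¹ x = γ₀ := by
        apply (g x).injective; exact (Equiv.apply_symm_apply (g x) x).trans h2.symm
      simp only [Equiv.Perm.mul_apply, hk1]
      exact hkey
    · simp only [Equiv.Perm.mul_apply, hk2]
      exact Equiv.symm_apply_apply _ _
  -- subset facts
  have hA_sub : A ⊆ O ×ˢ O := by
    rintro ⟨p, q⟩ ⟨k, hk, hk1, hk2⟩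
    constructor
    · exact hk1 ▸ ⟨k, hk, rfl⟩
    · exact hk2 ▸ orbmem k hk β hβ
  have hMiss_sub : Miss ⊆ O ×ˢ O := by
    rintro p ⟨x, hx, rfl⟩
    exact ⟨hx, orbmem _ (hg x hx).1 δ₀ hδ₀⟩
  have hDiag_sub : Diag ⊆ O ×ˢ O := by
    rintro p ⟨x, hx, rfl⟩
    exact ⟨hx, hx⟩
  -- arcs have distinct coordinates
  have hA_ne : ∀ p ∈ A, p.1 ≠ p.2 := by
    rintro ⟨p, q⟩ ⟨k, hk, hk1, hk2⟩ h
    exact hαβ (k.injective (by simp only at h; rw [hk1, hk2, h]))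
  have hMiss_ne : ∀ p ∈ Miss, p.1 ≠ p.2 := by
    rintro p ⟨x, hx, rfl⟩ h
    simp only at h
    exact hne0 ((g x).injective ((hg x hx).2.trans h))
  -- disjointness
  have hdisjAM : Disjoint A Miss := by
    rw [Set.disjoint_right]
    rintro p ⟨x, hx, rfl⟩ hmem
    exact hmiss_not_arc x hx hmem
  have hdisjAD : Disjoint A Diag := by
    rw [Set.disjoint_right]
    rintro p ⟨x, hx, rfl⟩ hmem
    exact hA_ne _ hmem rfl
  have hdisjMD : Disjoint Miss Diag := by
    rw [Set.disjoint_right]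
    rintro p ⟨x, hx, rfl⟩ hmem
    exact hMiss_ne _ hmem rfl
  -- cardinalities
  have hMiss_card : Miss.ncard = n := by
    rw [hMiss]
    exact Set.ncard_image_of_injOn (fun a _ b _ h => (Prod.mk.injEq .. ▸ h).1)
  have hDiag_card : Diag.ncard = n := by
    rw [hDiag]
    exact Set.ncard_image_of_injOn (fun a _ b _ h => (Prod.mk.injEq .. ▸ h).1)
  have hprod_card : (O ×ˢ O).ncard = n * n := by
    rw [← Nat.card_coe_set_eq, Nat.card_congr (Equiv.Set.prod O O), Nat.card_prod,
      Nat.card_coe_set_eq]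
  have hn2 : 2 ≤ n := by
    have : ({α, β} : Set Ω) ⊆ O := by
      rintro x (rfl | rfl)
      exacts [hα, hβ]
    calc 2 = ({α, β} : Set Ω).ncard := (Set.ncard_pair hαβ).symm
    _ ≤ n := Set.ncard_le_ncard this (Set.toFinite O)
  -- the counting argument
  have hunion : A ∪ Miss ∪ Diag ⊆ O ×ˢ O :=
    Set.union_subset (Set.union_subset hA_sub hMiss_sub) hDiag_sub
  have hcard_union : (A ∪ Miss ∪ Diag).ncard = A.ncard + n + n := by
    rw [Set.ncard_union_eq (by
        rw [Set.disjoint_union_left]; exact ⟨hdisjAD, hdisjMD⟩)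
      (Set.toFinite _) (Set.toFinite _),
      Set.ncard_union_eq hdisjAM (Set.toFinite _) (Set.toFinite _), hMiss_card, hDiag_card]
  have hle : A.ncard + n + n ≤ n * n := by
    rw [← hcard_union, ← hprod_card]
    exact Set.ncard_le_ncard hunion (Set.toFinite _)
  have hmul : n * (n - 2) = n * n - 2 * n := by
    rw [Nat.mul_sub]; ring_nf
  omega
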